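/- arXiv:1009.6019 — 6 statements merged into one kernel-verified Lean document; each statement's English description precedes it below -/
import Mathlib

section
/- Let A, B : ℝ → ℝ be continuous functions on [0,1] satisfying A(1/2 + t) = -A(1/2 - t) and B(1/2 + t) = -B(1/2 - t) for all t ∈ [0, 1/2]. If z : [0,1] → ℝ is a solution of the differential equation z' = A(t)z³ + B(t)z², then z(1/2 + t) = z(1/2 - t) for all t ∈ [0, 1/2]; in particular z(0) = z(1). -/
open Set

theorem stmt_0 (A B z : ℝ → ℝ)
    (hA : ContinuousOn A (Icc 0 1)) (hB : ContinuousOn B (Icc 0 1))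
    (hAsym : ∀ t ∈ Icc (0:ℝ) (1/2), A (1/2 + t) = -A (1/2 - t))
    (hBsym : ∀ t ∈ Icc (0:ℝ) (1/2), B (1/2 + t) = -B (1/2 - t))
    (hz : ∀ t ∈ Icc (0:ℝ) 1, HasDerivAt z (A t * z t ^ 3 + B t * z t ^ 2) t) :
    (∀ t ∈ Icc (0:ℝ) (1/2), z (1/2 + t) = z (1/2 - t)) ∧ z 0 = z 1 := by
  -- antisymmetry across 1/2 in the form A (1 - t) = - A t
  have hAanti : ∀ t ∈ Icc (0:ℝ) 1, A (1 - t) = -A t := by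
    intro t ht
    rcases le_total t (1/2) with h | h
    · have := hAsym (1/2 - t) ⟨by linarith [ht.1], by linarith [ht.1]⟩
      rw [show (1/2 + (1/2 - t) : ℝ) = 1 - t by ring,
        show (1/2 - (1/2 - t) : ℝ) = t by ring] at this
      exact this
    · have := hAsym (t - 1/2) ⟨by linarith, by linarith [ht.2]⟩
      rw [show (1/2 + (t - 1/2) : ℝ) = t by ring,
        show (1/2 - (t - 1/2) : ℝ) = 1 - t by ring] at this
      linarith
  have hBanti : ∀ t ∈ Icc (0:ℝ) 1, B (1 - t) = -B t := by
    intro t ht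
    rcases le_total t (1/2) with h | h
    · have := hBsym (1/2 - t) ⟨by linarith [ht.1], by linarith [ht.1]⟩
      rw [show (1/2 + (1/2 - t) : ℝ) = 1 - t by ring,
        show (1/2 - (1/2 - t) : ℝ) = t by ring] at this
      exact this
    · have := hBsym (t - 1/2) ⟨by linarith, by linarith [ht.2]⟩
      rw [show (1/2 + (t - 1/2) : ℝ) = t by ring,
        show (1/2 - (t - 1/2) : ℝ) = 1 - t by ring] at this
      linarith
  -- continuity of z on [0,1]
  have hzc : ContinuousOn z (Icc 0 1) := fun t ht =>
    ((hz t ht).continuousAt).continuousWithinAt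
  -- bounds
  obtain ⟨M0, hM0⟩ := isCompact_Icc.exists_bound_of_continuousOn hzc
  obtain ⟨CA0, hCA0⟩ := isCompact_Icc.exists_bound_of_continuousOn hA
  obtain ⟨CB0, hCB0⟩ := isCompact_Icc.exists_bound_of_continuousOn hB
  set M := max M0 0 with hMdef
  set CA := max CA0 0 with hCAdef
  set CB := max CB0 0 with hCBdef
  have hM : ∀ t ∈ Icc (0:ℝ) 1, |z t| ≤ M := fun t ht =>
    le_trans (by simpa using hM0 t ht) (le_max_left _ _)
  have hCA : ∀ t ∈ Icc (0:ℝ) 1, |A t| ≤ CA := fun t ht =>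
    le_trans (by simpa using hCA0 t ht) (le_max_left _ _)
  have hCB : ∀ t ∈ Icc (0:ℝ) 1, |B t| ≤ CB := fun t ht =>
    le_trans (by simpa using hCB0 t ht) (le_max_left _ _)
  have hMnn : (0:ℝ) ≤ M := le_max_right _ _
  have hCAnn : (0:ℝ) ≤ CA := le_max_right _ _
  have hCBnn : (0:ℝ) ≤ CB := le_max_right _ _
  -- clamp
  set c : ℝ → ℝ := fun t => min (max t 0) 1 with hc
  have hcmem : ∀ t, c t ∈ Icc (0:ℝ) 1 := fun t =>
    ⟨le_min (le_max_right _ _) zero_le_one, min_le_right _ _⟩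
  have hceq : ∀ t ∈ Icc (0:ℝ) 1, c t = t := fun t ht => by
    simp [hc, max_eq_left ht.1, min_eq_left ht.2]
  -- the vector field
  set v : ℝ → ℝ → ℝ := fun t x => A (c t) * x ^ 3 + B (c t) * x ^ 2 with hv
  set L : ℝ := CA * (3 * M ^ 2) + CB * (2 * M) with hL
  have hLnn : (0:ℝ) ≤ L := by positivity
  set K : NNReal := L.toNNReal with hK
  have hKL : (K : ℝ) = L := Real.coe_toNNReal _ hLnn
  have hlip : ∀ t : ℝ, LipschitzOnWith K (v t) (Icc (-M) M) := by
    intro t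
    rw [lipschitzOnWith_iff_dist_le_mul]
    intro x hx y hy
    rw [Real.dist_eq, Real.dist_eq, hKL]
    have hax := hCA _ (hcmem t)
    have hbx := hCB _ (hcmem t)
    have hxM : |x| ≤ M := abs_le.2 ⟨hx.1, hx.2⟩
    have hyM : |y| ≤ M := abs_le.2 ⟨hy.1, hy.2⟩
    have h1 : v t x - v t y = A (c t) * (x - y) * (x ^ 2 + x * y + y ^ 2)
        + B (c t) * (x - y) * (x + y) := by ring
    have hs3 : |x ^ 2 + x * y + y ^ 2| ≤ 3 * M ^ 2 := by
      have h := abs_add_three (x ^ 2) (x * y) (y ^ 2)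
      rw [abs_pow, abs_pow, abs_mul] at h
      nlinarith [abs_nonneg x, abs_nonneg y]
    have hs2 : |x + y| ≤ 2 * M := by
      have := abs_add_le x y
      linarith
    have e1 : |A (c t) * (x - y) * (x ^ 2 + x * y + y ^ 2)|
        ≤ CA * |x - y| * (3 * M ^ 2) := by
      rw [abs_mul, abs_mul]
      exact mul_le_mul (mul_le_mul hax le_rfl (abs_nonneg _) hCAnn) hs3 (abs_nonneg _)
        (mul_nonneg hCAnn (abs_nonneg _))
    have e2 : |B (c t) * (x - y) * (x + y)| ≤ CB * |x - y| * (2 * M) := by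
      rw [abs_mul, abs_mul]
      exact mul_le_mul (mul_le_mul hbx le_rfl (abs_nonneg _) hCBnn) hs2 (abs_nonneg _)
        (mul_nonneg hCBnn (abs_nonneg _))
    have habs := abs_add_le (A (c t) * (x - y) * (x ^ 2 + x * y + y ^ 2))
      (B (c t) * (x - y) * (x + y))
    rw [h1]
    have hfin : CA * |x - y| * (3 * M ^ 2) + CB * |x - y| * (2 * M) = L * |x - y| := by
      rw [hL]; ring
    linarith
  have hveq : ∀ t ∈ Icc (0:ℝ) 1, ∀ x : ℝ, v t x = A t * x ^ 3 + B t * x ^ 2 := by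
    intro t ht x
    simp only [hv]
    rw [hceq t ht]
  -- w = z ∘ (1 - ·)
  set w : ℝ → ℝ := fun t => z (1 - t) with hw
  have hwmem : ∀ t ∈ Icc (0:ℝ) 1, (1 - t) ∈ Icc (0:ℝ) 1 := fun t ht =>
    ⟨by linarith [ht.2], by linarith [ht.1]⟩
  have hwderiv : ∀ t ∈ Ioo (0:ℝ) 1, HasDerivAt w (v t (w t)) t := by
    intro t ht
    have htI := Ioo_subset_Icc_self ht
    have ht' := hwmem t htI
    have h1 : HasDerivAt (fun s : ℝ => 1 - s) (-1) t := by
      simpa using (hasDerivAt_id t).const_sub 1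
    have h2 := (hz (1 - t) ht').comp t h1
    have h3 : (A (1-t) * z (1-t) ^ 3 + B (1-t) * z (1-t) ^ 2) * (-1)
        = v t (w t) := by
      rw [hveq t htI, hAanti t htI, hBanti t htI]
      simp only [hw]
      ring
    rw [h3] at h2
    exact h2
  have hzderiv : ∀ t ∈ Ioo (0:ℝ) 1, HasDerivAt z (v t (z t)) t := by
    intro t ht
    have := hz t (Ioo_subset_Icc_self ht)
    rwa [← hveq t (Ioo_subset_Icc_self ht)] at this
  have hwc : ContinuousOn w (Icc 0 1) := by
    apply hzc.comp ((continuous_const.sub continuous_id).continuousOn)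
    exact fun t ht => hwmem t ht
  have hzs : ∀ t ∈ Ioo (0:ℝ) 1, z t ∈ Icc (-M) M := fun t ht =>
    abs_le.1 (hM t (Ioo_subset_Icc_self ht))
  have hws : ∀ t ∈ Ioo (0:ℝ) 1, w t ∈ Icc (-M) M := fun t ht =>
    abs_le.1 (hM (1 - t) (hwmem t (Ioo_subset_Icc_self ht)))
  have heq : z (1/2 : ℝ) = w (1/2 : ℝ) := by norm_num [hw]
  have huniq : EqOn z w (Icc 0 1) :=
    ODE_solution_unique_of_mem_Icc (fun t _ => hlip t) (by norm_num : (1/2:ℝ) ∈ Ioo 0 1)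
      hzc hzderiv hzs hwc hwderiv hws heq
  constructor
  · intro t ht
    have h1 : (1/2 + t : ℝ) ∈ Icc (0:ℝ) 1 := ⟨by linarith [ht.1], by linarith [ht.2]⟩
    have := huniq h1
    simp only [hw] at this
    rwa [show (1 - (1/2 + t) : ℝ) = 1/2 - t by ring] at this
  · have := huniq (⟨le_refl 0, zero_le_one⟩ : (0:ℝ) ∈ Icc 0 1)
    simp only [hw] at this
    simpa using this
end

section
/- Let A, B : ℝ → ℝ be continuous functions on [0,1] such that every solution z of z' = A(t)z³ + B(t)z² with sufficiently small initial value z(0) satisfies z(1/2 + t) = z(1/2 - t) for all t ∈ [0, 1/2]. Then A(1/2 + t) = -A(1/2 - t) and B(1/2 + t) = -B(1/2 - t) for all t ∈ [0, 1/2]. -/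
open Set Metric Filter Topology

private lemma lip_aux {A B M : ℝ} (hM : 0 ≤ M) (hA : |A| ≤ M) (hB : |B| ≤ M) :
    LipschitzOnWith (Real.toNNReal (5*M)) (fun x => A * x^3 + B * x^2) (closedBall (0:ℝ) 1) := by
  rw [lipschitzOnWith_iff_dist_le_mul]
  intro x hx y hy
  rw [mem_closedBall, Real.dist_eq, sub_zero] at hx hy
  rw [Real.dist_eq, Real.dist_eq]
  have key : A * x^3 + B * x^2 - (A * y^3 + B * y^2)
      = (x - y) * (A * (x^2 + x*y + y^2) + B * (x + y)) := by ring
  rw [key, abs_mul]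
  have ax := abs_nonneg x
  have ay := abs_nonneg y
  have h2 : |A * (x^2 + x*y + y^2) + B * (x + y)| ≤ 5*M := by
    have hx2 : |x^2 + x*y + y^2| ≤ 3 := by
      calc |x^2 + x*y + y^2| ≤ |x^2| + |x*y| + |y^2| := abs_add_three _ _ _
        _ = |x|^2 + |x| * |y| + |y|^2 := by rw [abs_mul, ← abs_pow, ← abs_pow]
        _ ≤ 3 := by nlinarith
    have hxy : |x + y| ≤ 2 := (abs_add_le _ _).trans (by linarith)
    calc |A * (x^2 + x*y + y^2) + B * (x + y)| ≤ |A| * |x^2+x*y+y^2| + |B| * |x+y| := by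
          rw [← abs_mul, ← abs_mul]; exact abs_add_le _ _
      _ ≤ M * 3 + M * 2 := by
          have := abs_nonneg (x^2+x*y+y^2)
          have := abs_nonneg (x+y)
          have := abs_nonneg A
          have := abs_nonneg B
          nlinarith
      _ = 5 * M := by ring
  have h5 : ((Real.toNNReal (5*M) : NNReal) : ℝ) = 5*M := Real.coe_toNNReal _ (by linarith)
  rw [h5, mul_comm ((5:ℝ)*M)]
  exact mul_le_mul_of_nonneg_left h2 (abs_nonneg _)

private structure OldIsPicardLindelof (v : ℝ → ℝ → ℝ) (tMin t₀ tMax : ℝ) (x₀ : ℝ) (L : NNReal)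
    (R C : ℝ) : Prop where
  ht₀ : t₀ ∈ Icc tMin tMax
  hR : 0 ≤ R
  lipschitz : ∀ t ∈ Icc tMin tMax, LipschitzOnWith L (v t) (closedBall x₀ R)
  cont : ∀ x ∈ closedBall x₀ R, ContinuousOn (v · x) (Icc tMin tMax)
  norm_le : ∀ t ∈ Icc tMin tMax, ∀ x ∈ closedBall x₀ R, ‖v t x‖ ≤ C
  C_mul_le_R : (C : ℝ) * max (tMax - t₀) (t₀ - tMin) ≤ R

private lemma pl_exists {v : ℝ → ℝ → ℝ} {tMin t₀ tMax : ℝ} (x₀ : ℝ) {C R : ℝ} {L : NNReal}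
    (hpl : OldIsPicardLindelof v tMin t₀ tMax x₀ L R C) :
    ∃ f : ℝ → ℝ, f t₀ = x₀ ∧ (∀ t ∈ Icc tMin tMax, f t ∈ closedBall x₀ R) ∧
      ∀ t ∈ Icc tMin tMax, HasDerivWithinAt f (v t (f t)) (Icc tMin tMax) t := by
  have hC : 0 ≤ C := (norm_nonneg _).trans
    (hpl.norm_le t₀ hpl.ht₀ x₀ (mem_closedBall_self hpl.hR))
  have hpl' := hpl
  lift C to NNReal using hC
  lift R to NNReal using hpl.hR
  lift t₀ to Icc tMin tMax using hpl.ht₀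
  have hf : IsPicardLindelof v t₀ x₀ R 0 C L :=
    ⟨hpl'.lipschitz, hpl'.cont, hpl'.norm_le, by simpa using hpl'.C_mul_le_R⟩
  have hx : x₀ ∈ closedBall x₀ ((0 : NNReal) : ℝ) := mem_closedBall_self le_rfl
  obtain ⟨α, hα⟩ := ODE.FunSpace.exists_isFixedPt_next hf hx
  refine ⟨α.compProj, by rw [ODE.FunSpace.compProj_val, ← hα,
    ODE.FunSpace.next_apply₀], fun t ht => ?_, fun t ht ↦ ?_⟩
  · exact α.compProj_mem_closedBall hf.mul_max_le
  apply ODE.hasDerivWithinAt_picard_Icc t₀.2 hf.continuousOn_uncurry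
    α.continuous_compProj.continuousOn
    (fun _ ht' ↦ α.compProj_mem_closedBall hf.mul_max_le)
    x₀ ht |>.congr_of_mem _ ht
  intro t' ht'
  nth_rw 1 [← hα]
  rw [ODE.FunSpace.compProj_of_mem ht', ODE.FunSpace.next_apply]

private lemma extend_deriv (f F : ℝ → ℝ)
    (hf : ∀ t ∈ Icc (0:ℝ) 1, HasDerivWithinAt f (F t) (Icc 0 1) t) :
    ∃ z : ℝ → ℝ, EqOn z f (Icc 0 1) ∧ ∀ t ∈ Icc (0:ℝ) 1, HasDerivAt z (F t) t := by
  classical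
  set z : ℝ → ℝ := fun t =>
    if t < 0 then f 0 + F 0 * t else if 1 < t then f 1 + F 1 * (t - 1) else f t with hzdef
  have hEq : EqOn z f (Icc (0:ℝ) 1) := by
    intro t ht
    simp only [hzdef, not_lt.mpr ht.1, not_lt.mpr ht.2, if_false, if_neg (not_lt.mpr ht.1),
      if_neg (not_lt.mpr ht.2)]
  refine ⟨z, hEq, fun t ht => ?_⟩
  rcases eq_or_lt_of_le ht.1 with h0 | h0
  · -- t = 0
    subst h0
    have hr : HasDerivWithinAt z (F 0) (Ici (0:ℝ)) 0 := by
      have h1 : Icc (0:ℝ) 1 ∈ 𝓝[Ici (0:ℝ)] 0 := Icc_mem_nhdsGE (by norm_num)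
      have := (hf 0 ht).mono_of_mem_nhdsWithin h1
      exact this.congr_of_eventuallyEq
        (by filter_upwards [h1] with u hu using hEq hu) (hEq ht)
    have hl : HasDerivWithinAt z (F 0) (Iic (0:ℝ)) 0 := by
      have hlin : HasDerivAt (fun u : ℝ => f 0 + F 0 * u) (F 0) 0 := by
        simpa using ((hasDerivAt_id (0:ℝ)).const_mul (F 0)).const_add (f 0)
      refine (hlin.hasDerivWithinAt).congr (fun u hu => ?_) ?_
      · rcases lt_or_eq_of_le (mem_Iic.mp hu) with h | h
        · simp [hzdef, h]
        · subst h; simp [hzdef, hEq ht]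
      · simp [hzdef, hEq ht]
    have := hl.union hr
    rwa [Iic_union_Ici, hasDerivWithinAt_univ] at this
  rcases eq_or_lt_of_le ht.2 with h1 | h1
  · -- t = 1
    subst h1
    have hl : HasDerivWithinAt z (F 1) (Iic (1:ℝ)) 1 := by
      have h1m : Icc (0:ℝ) 1 ∈ 𝓝[Iic (1:ℝ)] 1 := Icc_mem_nhdsLE (by norm_num)
      exact ((hf 1 ht).mono_of_mem_nhdsWithin h1m).congr_of_eventuallyEq
        (by filter_upwards [h1m] with u hu using hEq hu) (hEq ht)
    have hr : HasDerivWithinAt z (F 1) (Ici (1:ℝ)) 1 := by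
      have hlin : HasDerivAt (fun u : ℝ => f 1 + F 1 * (u - 1)) (F 1) 1 := by
        simpa using (((hasDerivAt_id (1:ℝ)).sub_const 1).const_mul (F 1)).const_add (f 1)
      refine (hlin.hasDerivWithinAt).congr (fun u hu => ?_) ?_
      · rcases eq_or_lt_of_le (mem_Ici.mp hu) with h | h
        · rw [← h]; have := hEq ht; norm_num [hzdef] at this ⊢
        · simp [hzdef, h, show ¬ u < 0 by linarith]
      · have := hEq ht; norm_num [hzdef] at this ⊢
    have := hl.union hr
    rwa [Iic_union_Ici, hasDerivWithinAt_univ] at this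
  · -- interior
    have hmem : Icc (0:ℝ) 1 ∈ 𝓝 t := Icc_mem_nhds h0 h1
    have := (hf t ht).hasDerivAt hmem
    refine this.congr_of_eventuallyEq ?_
    filter_upwards [Icc_mem_nhds h0 h1] with u hu using hEq hu

theorem stmt_1 (A B : ℝ → ℝ)
    (hA : ContinuousOn A (Icc 0 1)) (hB : ContinuousOn B (Icc 0 1))
    (ε : ℝ) (hε : 0 < ε)
    (hsym : ∀ z : ℝ → ℝ,
      (∀ t ∈ Icc (0:ℝ) 1, HasDerivAt z (A t * z t ^ 3 + B t * z t ^ 2) t) →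
      |z 0| < ε →
      ∀ t ∈ Icc (0:ℝ) (1/2), z (1/2 + t) = z (1/2 - t)) :
    (∀ t ∈ Icc (0:ℝ) (1/2), A (1/2 + t) = -A (1/2 - t)) ∧
    (∀ t ∈ Icc (0:ℝ) (1/2), B (1/2 + t) = -B (1/2 - t)) := by
  classical
  obtain ⟨Ma, hMa⟩ := (isCompact_Icc : IsCompact (Icc (0:ℝ) 1)).exists_bound_of_continuousOn hA
  obtain ⟨Mb, hMb⟩ := (isCompact_Icc : IsCompact (Icc (0:ℝ) 1)).exists_bound_of_continuousOn hB
  set M : ℝ := max 1 (max Ma Mb) with hMdef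
  have hM1 : (1:ℝ) ≤ M := le_max_left _ _
  have hM0 : (0:ℝ) < M := lt_of_lt_of_le one_pos hM1
  have hMA : ∀ t ∈ Icc (0:ℝ) 1, |A t| ≤ M := by
    intro t ht
    have h := hMa t ht; rw [Real.norm_eq_abs] at h
    exact h.trans ((le_max_left Ma Mb).trans (le_max_right _ _))
  have hMB : ∀ t ∈ Icc (0:ℝ) 1, |B t| ≤ M := by
    intro t ht
    have h := hMb t ht; rw [Real.norm_eq_abs] at h
    exact h.trans ((le_max_right Ma Mb).trans (le_max_right _ _))
  set δ : ℝ := min (ε/2) (1/(16*M)) with hδdef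
  have hδ0 : 0 < δ := lt_min (half_pos hε) (by positivity)
  have hδε : δ < ε := lt_of_le_of_lt (min_le_left _ _) (half_lt_self hε)
  have hδM : δ * (16*M) ≤ 1 := by
    have h := min_le_right (ε/2) (1/(16*M))
    rw [le_div_iff₀ (by positivity)] at h
    simpa [hδdef] using h
  have hδ16 : δ ≤ 1/16 := by nlinarith
  -- construction of solutions with small positive initial values
  have key : ∀ x₀ : ℝ, 0 < x₀ → x₀ ≤ δ → ∃ z : ℝ → ℝ, z 0 = x₀ ∧
      (∀ t ∈ Icc (0:ℝ) 1, |z t| ≤ 1) ∧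
      (∀ t ∈ Icc (0:ℝ) 1, HasDerivAt z (A t * z t ^ 3 + B t * z t ^ 2) t) := by
    intro x₀ hx₀ hx₀δ
    have hpl : OldIsPicardLindelof (fun t x => A t * x^3 + B t * x^2) 0 0 1 x₀
        (Real.toNNReal (5*M)) δ (8*M*δ^2) := by
      refine ⟨left_mem_Icc.mpr (by norm_num), hδ0.le, ?_, ?_, ?_, ?_⟩
      · intro t ht
        refine (lip_aux hM0.le (hMA t ht) (hMB t ht)).mono ?_
        refine closedBall_subset_closedBall' ?_
        have hd : dist x₀ 0 = x₀ := by rw [Real.dist_eq, sub_zero, abs_of_pos hx₀]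
        rw [hd]; linarith
      · intro x hx
        exact (hA.mul continuousOn_const).add (hB.mul continuousOn_const)
      · intro t ht x hx
        rw [mem_closedBall, Real.dist_eq] at hx
        have hxb : |x| ≤ 2*δ := by
          have h1 : |x| ≤ |x - x₀| + |x₀| := by
            calc |x| = |(x - x₀) + x₀| := by ring_nf
              _ ≤ |x - x₀| + |x₀| := abs_add_le _ _
          rw [abs_of_pos hx₀] at h1; linarith
        rw [Real.norm_eq_abs]
        have hax := abs_nonneg x
        have hAt := hMA t ht
        have hBt := hMB t ht
        calc |A t * x^3 + B t * x^2| ≤ |A t| * |x|^3 + |B t| * |x|^2 := by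
              rw [← abs_pow, ← abs_pow, ← abs_mul, ← abs_mul]; exact abs_add_le _ _
          _ ≤ M * (2*δ)^3 + M * (2*δ)^2 := by
              have h3 : |x|^3 ≤ (2*δ)^3 := pow_le_pow_left₀ hax hxb 3
              have h2 : |x|^2 ≤ (2*δ)^2 := pow_le_pow_left₀ hax hxb 2
              nlinarith [abs_nonneg (A t), abs_nonneg (B t), pow_nonneg hax 3, pow_nonneg hax 2]
          _ ≤ 8*M*δ^2 := by nlinarith
      · have hmax : max ((1:ℝ) - 0) (0 - 0) = 1 := by norm_num
        rw [hmax, mul_one]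
        nlinarith
    obtain ⟨f, hf0, hfball, hfderiv⟩ := pl_exists x₀ hpl
    have hfb : ∀ t ∈ Icc (0:ℝ) 1, |f t| ≤ 1 := by
      intro t ht
      have hb := hfball t ht
      rw [mem_closedBall, Real.dist_eq] at hb
      have h1 : |f t| ≤ |f t - x₀| + |x₀| := by
        calc |f t| = |(f t - x₀) + x₀| := by ring_nf
          _ ≤ |f t - x₀| + |x₀| := abs_add_le _ _
      rw [abs_of_pos hx₀] at h1
      linarith
    obtain ⟨z, hzEq, hzderiv⟩ := extend_deriv f (fun t => A t * f t ^ 3 + B t * f t ^ 2) hfderiv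
    refine ⟨z, ?_, ?_, ?_⟩
    · rw [hzEq (left_mem_Icc.mpr zero_le_one)]; exact hf0
    · intro t ht; rw [hzEq ht]; exact hfb t ht
    · intro t ht
      have h := hzderiv t ht
      rw [← hzEq ht] at h
      exact h
  -- uniqueness
  set S : ℝ → Set ℝ := fun t => if t ∈ Icc (0:ℝ) 1 then closedBall (0:ℝ) 1 else {0} with hSdef
  have hv : ∀ t, LipschitzOnWith (Real.toNNReal (5*M)) (fun x => A t * x^3 + B t * x^2) (S t) := by
    intro t
    by_cases ht : t ∈ Icc (0:ℝ) 1
    · rw [hSdef]; simp only [if_pos ht]; exact lip_aux hM0.le (hMA t ht) (hMB t ht)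
    · rw [hSdef]; simp only [if_neg ht]
      intro x hx y hy
      rw [mem_singleton_iff] at hx hy
      subst hx; subst hy; simp
  have huniq : ∀ z₁ z₂ : ℝ → ℝ,
      (∀ t ∈ Icc (0:ℝ) 1, HasDerivAt z₁ (A t * z₁ t ^ 3 + B t * z₁ t ^ 2) t) →
      (∀ t ∈ Icc (0:ℝ) 1, |z₁ t| ≤ 1) →
      (∀ t ∈ Icc (0:ℝ) 1, HasDerivAt z₂ (A t * z₂ t ^ 3 + B t * z₂ t ^ 2) t) →
      (∀ t ∈ Icc (0:ℝ) 1, |z₂ t| ≤ 1) →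
      ∀ s₀ ∈ Icc (0:ℝ) 1, z₁ s₀ = z₂ s₀ → z₁ 0 = z₂ 0 := by
    intro z₁ z₂ h₁ hb₁ h₂ hb₂ s₀ hs₀ heq
    rcases eq_or_lt_of_le hs₀.1 with h0 | h0
    · rwa [← h0] at heq
    · have hsub : Icc (0:ℝ) s₀ ⊆ Icc 0 1 := Icc_subset_Icc_right hs₀.2
      have hsub2 : Ioc (0:ℝ) s₀ ⊆ Icc 0 1 := fun u hu => ⟨hu.1.le, hu.2.trans hs₀.2⟩
      have hEqOn := ODE_solution_unique_of_mem_Icc_left (fun t _ => hv t)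
        (fun u hu => (h₁ u (hsub hu)).continuousAt.continuousWithinAt)
        (fun u hu => (h₁ u (hsub2 hu)).hasDerivWithinAt)
        (fun u hu => by
          rw [hSdef]; simp only [if_pos (hsub2 hu)]
          rw [mem_closedBall, Real.dist_eq, sub_zero]; exact hb₁ u (hsub2 hu))
        (fun u hu => (h₂ u (hsub hu)).continuousAt.continuousWithinAt)
        (fun u hu => (h₂ u (hsub2 hu)).hasDerivWithinAt)
        (fun u hu => by
          rw [hSdef]; simp only [if_pos (hsub2 hu)]
          rw [mem_closedBall, Real.dist_eq, sub_zero]; exact hb₂ u (hsub2 hu))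
        heq
      exact hEqOn (left_mem_Icc.mpr h0.le)
  -- derivative symmetry
  have hFsym : ∀ z : ℝ → ℝ,
      (∀ t ∈ Icc (0:ℝ) 1, HasDerivAt z (A t * z t ^ 3 + B t * z t ^ 2) t) →
      (∀ s ∈ Icc (0:ℝ) 1, z s = z (1 - s)) →
      ∀ s ∈ Icc (0:ℝ) 1,
        A s * z s ^ 3 + B s * z s ^ 2
          = -(A (1-s) * z (1-s) ^ 3 + B (1-s) * z (1-s) ^ 2) := by
    intro z hz hsz s hs
    have h1s : 1 - s ∈ Icc (0:ℝ) 1 := ⟨by linarith [hs.2], by linarith [hs.1]⟩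
    have hneg : HasDerivAt (fun u : ℝ => 1 - u) (-1) s := by
      simpa using (hasDerivAt_id' s).const_sub (1:ℝ)
    have hw : HasDerivAt (fun u => z (1 - u))
        (-(A (1-s) * z (1-s) ^ 3 + B (1-s) * z (1-s) ^ 2)) s := by
      have hc := (hz (1-s) h1s).comp s hneg
      simpa [Function.comp_def, mul_neg_one] using hc
    have hzw : HasDerivWithinAt z (-(A (1-s) * z (1-s)^3 + B (1-s) * z (1-s)^2))
        (Icc 0 1) s :=
      (hw.hasDerivWithinAt).congr (fun u hu => hsz u hu) (hsz s hs)
    have hzs : HasDerivWithinAt z (A s * z s^3 + B s * z s^2) (Icc 0 1) s :=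
      (hz s hs).hasDerivWithinAt
    have hud : UniqueDiffWithinAt ℝ (Icc (0:ℝ) 1) s := (uniqueDiffOn_Icc one_pos) s hs
    rw [← hzs.derivWithin hud, ← hzw.derivWithin hud]
  -- the two solutions
  obtain ⟨z₁, hz₁0, hz₁b, hz₁d⟩ := key δ hδ0 le_rfl
  obtain ⟨z₂, hz₂0, hz₂b, hz₂d⟩ := key (δ/2) (half_pos hδ0) (by linarith)
  have hzsym : ∀ z : ℝ → ℝ,
      (∀ t ∈ Icc (0:ℝ) 1, HasDerivAt z (A t * z t ^ 3 + B t * z t ^ 2) t) →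
      |z 0| < ε → ∀ s ∈ Icc (0:ℝ) 1, z s = z (1 - s) := by
    intro z hz hz0 s hs
    rcases le_total s (1/2) with h | h
    · have hh := hsym z hz hz0 (1/2 - s) ⟨by linarith [hs.1, hs.2], by linarith [hs.1, hs.2]⟩
      rw [show (1:ℝ)/2 + (1/2 - s) = 1 - s by ring,
        show (1:ℝ)/2 - (1/2 - s) = s by ring] at hh
      exact hh.symm
    · have hh := hsym z hz hz0 (s - 1/2) ⟨by linarith [hs.1, hs.2], by linarith [hs.1, hs.2]⟩
      rw [show (1:ℝ)/2 + (s - 1/2) = s by ring,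
        show (1:ℝ)/2 - (s - 1/2) = 1 - s by ring] at hh
      exact hh
  have hs₁ : ∀ s ∈ Icc (0:ℝ) 1, z₁ s = z₁ (1 - s) :=
    hzsym z₁ hz₁d (by rw [hz₁0, abs_of_pos hδ0]; exact hδε)
  have hs₂ : ∀ s ∈ Icc (0:ℝ) 1, z₂ s = z₂ (1 - s) :=
    hzsym z₂ hz₂d (by rw [hz₂0, abs_of_pos (half_pos hδ0)]; linarith)
  -- nonvanishing and distinctness
  have hzero_d : ∀ t ∈ Icc (0:ℝ) 1,
      HasDerivAt (fun _ : ℝ => (0:ℝ)) (A t * (0:ℝ) ^ 3 + B t * (0:ℝ) ^ 2) t := by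
    intro t ht; simpa using hasDerivAt_const t (0:ℝ)
  have hne₁ : ∀ s ∈ Icc (0:ℝ) 1, z₁ s ≠ 0 := by
    intro s hs h
    have hu := huniq z₁ (fun _ => 0) hz₁d hz₁b hzero_d (fun t ht => by norm_num) s hs
      (by simpa using h)
    try simp only [] at hu
    rw [hz₁0] at hu
    exact absurd hu (ne_of_gt hδ0)
  have hne₂ : ∀ s ∈ Icc (0:ℝ) 1, z₂ s ≠ 0 := by
    intro s hs h
    have hu := huniq z₂ (fun _ => 0) hz₂d hz₂b hzero_d (fun t ht => by norm_num) s hs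
      (by simpa using h)
    rw [hz₂0] at hu
    exact absurd hu (ne_of_gt (half_pos hδ0))
  have hne₁₂ : ∀ s ∈ Icc (0:ℝ) 1, z₁ s ≠ z₂ s := by
    intro s hs h
    have hu := huniq z₁ z₂ hz₁d hz₁b hz₂d hz₂b s hs h
    rw [hz₁0, hz₂0] at hu
    linarith
  have hF₁ := hFsym z₁ hz₁d hs₁
  have hF₂ := hFsym z₂ hz₂d hs₂
  -- final algebra
  have main : ∀ t ∈ Icc (0:ℝ) (1/2), A (1/2+t) = -A (1/2-t) ∧ B (1/2+t) = -B (1/2-t) := by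
    intro t ht
    have hs : (1:ℝ)/2 + t ∈ Icc (0:ℝ) 1 := ⟨by linarith [ht.1], by linarith [ht.2]⟩
    have e : (1:ℝ) - (1/2 + t) = 1/2 - t := by ring
    have h₁ := hF₁ (1/2+t) hs
    have h₂ := hF₂ (1/2+t) hs
    rw [e] at h₁ h₂
    have hc₁ : z₁ (1/2 - t) = z₁ (1/2 + t) := by rw [← e]; exact (hs₁ (1/2+t) hs).symm
    have hc₂ : z₂ (1/2 - t) = z₂ (1/2 + t) := by rw [← e]; exact (hs₂ (1/2+t) hs).symm
    rw [hc₁] at h₁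
    rw [hc₂] at h₂
    have hp₁ : (A (1/2+t) + A (1/2-t)) * z₁ (1/2+t) + (B (1/2+t) + B (1/2-t)) = 0 := by
      have hcsq : z₁ (1/2+t) ^ 2 ≠ 0 := pow_ne_zero 2 (hne₁ _ hs)
      have hmul : z₁ (1/2+t) ^ 2 *
          ((A (1/2+t) + A (1/2-t)) * z₁ (1/2+t) + (B (1/2+t) + B (1/2-t))) = 0 := by
        linear_combination h₁
      rcases mul_eq_zero.mp hmul with h | h
      · exact absurd h hcsq
      · exact h
    have hp₂ : (A (1/2+t) + A (1/2-t)) * z₂ (1/2+t) + (B (1/2+t) + B (1/2-t)) = 0 := by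
      have hcsq : z₂ (1/2+t) ^ 2 ≠ 0 := pow_ne_zero 2 (hne₂ _ hs)
      have hmul : z₂ (1/2+t) ^ 2 *
          ((A (1/2+t) + A (1/2-t)) * z₂ (1/2+t) + (B (1/2+t) + B (1/2-t))) = 0 := by
        linear_combination h₂
      rcases mul_eq_zero.mp hmul with h | h
      · exact absurd h hcsq
      · exact h
    have hPc : (A (1/2+t) + A (1/2-t)) * (z₁ (1/2+t) - z₂ (1/2+t)) = 0 := by
      linear_combination hp₁ - hp₂
    have hP0 : A (1/2+t) + A (1/2-t) = 0 := by
      rcases mul_eq_zero.mp hPc with h | h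
      · exact h
      · exact absurd (sub_eq_zero.mp h) (hne₁₂ _ hs)
    have hQ0 : B (1/2+t) + B (1/2-t) = 0 := by
      rw [hP0] at hp₁; linarith [hp₁]
    exact ⟨by linarith, by linarith⟩
  exact ⟨fun t ht => (main t ht).1, fun t ht => (main t ht).2⟩
end

section
/- Suppose A(t) = s'(t)·A₁(s(t)) and B(t) = s'(t)·B₁(s(t)) for all t ∈ [0,1], where s : [0,1] → ℝ is continuously differentiable with s(0) = s(1), and A₁, B₁ : ℝ → ℝ are continuous. Then every solution z of z' = A(t)z³ + B(t)z² on [0,1] with sufficiently small |z(0)| satisfies z(0) = z(1). -/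
open Set Metric

lemma LipschitzOnWith.weaken' {K K' : NNReal} {f : ℝ → ℝ} {S : Set ℝ}
    (h : LipschitzOnWith K f S) (hK : K ≤ K') : LipschitzOnWith K' f S :=
  fun x hx y hy => (h hx hy).trans (mul_le_mul_left (ENNReal.coe_le_coe.mpr hK) _)

lemma cubic_lipschitzOnWith (a b r : ℝ) :
    LipschitzOnWith ((3 * |a| * r^2 + 2 * |b| * r).toNNReal)
      (fun w : ℝ => a*w^3 + b*w^2) (closedBall (0:ℝ) r) := by
  apply Convex.lipschitzOnWith_of_nnnorm_hasDerivWithin_le (f' := fun w => 3*a*w^2 + 2*b*w)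
    (convex_closedBall (0:ℝ) r)
  · intro x hx
    have h : HasDerivAt (fun w : ℝ => a*w^3 + b*w^2) (a*(3*x^2) + b*(2*x^1)) x := by
      simpa [Pi.add_def] using (((hasDerivAt_pow 3 x).const_mul a).add ((hasDerivAt_pow 2 x).const_mul b))
    have h2 : HasDerivAt (fun w : ℝ => a*w^3 + b*w^2) (3*a*x^2 + 2*b*x) x := by
      convert h using 1; ring
    exact h2.hasDerivWithinAt
  · intro x hx
    have hxr : |x| ≤ r := by simpa [Real.norm_eq_abs] using mem_closedBall_zero_iff.mp hx
    have hr : 0 ≤ r := (abs_nonneg x).trans hxr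
    have hb : ‖3*a*x^2 + 2*b*x‖ ≤ 3 * |a| * r^2 + 2 * |b| * r := by
      rw [Real.norm_eq_abs]
      calc |3*a*x^2 + 2*b*x| ≤ |3*a*x^2| + |2*b*x| := abs_add_le _ _
        _ = 3 * |a| * |x|^2 + 2 * |b| * |x| := by
            rw [abs_mul, abs_mul, abs_mul, abs_mul, abs_pow]; simp [abs_of_nonneg]
        _ ≤ 3 * |a| * r^2 + 2 * |b| * r := by
            have h2 : |x|^2 ≤ r^2 := by nlinarith [abs_nonneg x]
            have := abs_nonneg a; have := abs_nonneg b; nlinarith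
    rw [← NNReal.coe_le_coe, coe_nnnorm, Real.coe_toNNReal]
    · exact hb
    · positivity

structure IsPicardLindelofOld {E : Type*} [NormedAddCommGroup E] (v : ℝ → E → E)
    (tMin t₀ tMax : ℝ) (x₀ : E) (L : NNReal) (R C : ℝ) : Prop where
  ht₀ : t₀ ∈ Icc tMin tMax
  hR : 0 ≤ R
  lipschitz : ∀ t ∈ Icc tMin tMax, LipschitzOnWith L (v t) (closedBall x₀ R)
  cont : ∀ x ∈ closedBall x₀ R, ContinuousOn (fun t : ℝ => v t x) (Icc tMin tMax)
  norm_le : ∀ t ∈ Icc tMin tMax, ∀ x ∈ closedBall x₀ R, ‖v t x‖ ≤ C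
  C_mul_le_R : (C : ℝ) * max (tMax - t₀) (t₀ - tMin) ≤ R

lemma existsSolutionMem {v : ℝ → ℝ → ℝ} {tMin t₀ tMax : ℝ} (x₀ : ℝ) {C R : ℝ} {L : NNReal}
    (hpl : IsPicardLindelofOld v tMin t₀ tMax x₀ L R C) :
    ∃ f : ℝ → ℝ, f t₀ = x₀ ∧ (∀ t ∈ Icc tMin tMax, f t ∈ closedBall x₀ R) ∧
      ∀ t ∈ Icc tMin tMax, HasDerivWithinAt f (v t (f t)) (Icc tMin tMax) t := by
  have hC : 0 ≤ C := (norm_nonneg _).trans (hpl.norm_le t₀ hpl.ht₀ x₀ (mem_closedBall_self hpl.hR))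
  have hpl' : IsPicardLindelof v (⟨t₀, hpl.ht₀⟩ : Icc tMin tMax) x₀ R.toNNReal 0 C.toNNReal L := by
    refine ⟨?_, ?_, ?_, ?_⟩
    · simpa [Real.coe_toNNReal _ hpl.hR] using hpl.lipschitz
    · simpa [Real.coe_toNNReal _ hpl.hR] using hpl.cont
    · simpa [Real.coe_toNNReal _ hpl.hR, Real.coe_toNNReal _ hC] using hpl.norm_le
    · simpa [Real.coe_toNNReal _ hpl.hR, Real.coe_toNNReal _ hC] using hpl.C_mul_le_R
  have hx : x₀ ∈ closedBall x₀ ((0 : NNReal) : ℝ) := mem_closedBall_self le_rfl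
  obtain ⟨α, hα⟩ := ODE.FunSpace.exists_isFixedPt_next hpl' hx
  refine ⟨α.compProj, ?_, fun t ht => ?_, fun t ht => ?_⟩
  · have := ODE.FunSpace.compProj_val (α := α) (t := ⟨t₀, hpl.ht₀⟩)
    rw [this, ← hα, ODE.FunSpace.next_apply₀]
  · have := α.compProj_mem_closedBall hpl'.mul_max_le (t := t)
    simpa [Real.coe_toNNReal _ hpl.hR] using this
  · apply ODE.hasDerivWithinAt_picard_Icc hpl.ht₀ hpl'.continuousOn_uncurry
      α.continuous_compProj.continuousOn (fun _ ht' ↦ α.compProj_mem_closedBall hpl'.mul_max_le)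
      x₀ ht |>.congr_of_mem _ ht
    intro t' ht'
    nth_rw 1 [← hα]
    rw [ODE.FunSpace.compProj_of_mem ht', ODE.FunSpace.next_apply]

theorem stmt_2 (A B A₁ B₁ s : ℝ → ℝ)
    (hs : ∀ t ∈ Icc (0:ℝ) 1, HasDerivAt s (deriv s t) t)
    (hs' : ContinuousOn (deriv s) (Icc 0 1))
    (hsper : s 0 = s 1)
    (hA₁ : Continuous A₁) (hB₁ : Continuous B₁)
    (hA : ∀ t ∈ Icc (0:ℝ) 1, A t = deriv s t * A₁ (s t))
    (hB : ∀ t ∈ Icc (0:ℝ) 1, B t = deriv s t * B₁ (s t)) :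
    ∃ ε > (0:ℝ), ∀ z : ℝ → ℝ,
      (∀ t ∈ Icc (0:ℝ) 1, HasDerivAt z (A t * z t ^ 3 + B t * z t ^ 2) t) →
      |z 0| < ε → z 0 = z 1 := by
  have hscont : ContinuousOn s (Icc 0 1) := fun t ht => ((hs t ht).continuousAt).continuousWithinAt
  have hKcpt : IsCompact (s '' Icc (0:ℝ) 1) := isCompact_Icc.image_of_continuousOn hscont
  have hKne : (s '' Icc (0:ℝ) 1).Nonempty := ⟨s 0, ⟨0, by norm_num, rfl⟩⟩
  obtain ⟨m, hmK⟩ := hKcpt.exists_isLeast hKne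
  obtain ⟨M, hMK⟩ := hKcpt.exists_isGreatest hKne
  have hmemJ : MapsTo s (Icc (0:ℝ) 1) (Icc m M) :=
    fun t ht => ⟨hmK.2 ⟨t, ht, rfl⟩, hMK.2 ⟨t, ht, rfl⟩⟩
  have h0J : s 0 ∈ Icc m M := hmemJ (by norm_num : (0:ℝ) ∈ Icc (0:ℝ) 1)
  set t₀ := s 0 with ht₀def
  -- bounds for A₁, B₁ on [m, M]
  obtain ⟨Ca0, hCa0⟩ := (isCompact_Icc (a := m) (b := M)).exists_bound_of_continuousOn
    hA₁.continuousOn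
  obtain ⟨Cb0, hCb0⟩ := (isCompact_Icc (a := m) (b := M)).exists_bound_of_continuousOn
    hB₁.continuousOn
  set Ca := max Ca0 0 with hCadef
  set Cb := max Cb0 0 with hCbdef
  have hCa : ∀ u ∈ Icc m M, |A₁ u| ≤ Ca := fun u hu =>
    le_trans (by simpa [Real.norm_eq_abs] using hCa0 u hu) (le_max_left _ _)
  have hCb : ∀ u ∈ Icc m M, |B₁ u| ≤ Cb := fun u hu =>
    le_trans (by simpa [Real.norm_eq_abs] using hCb0 u hu) (le_max_left _ _)
  have hCapos : 0 ≤ Ca := le_max_right _ _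
  have hCbpos : 0 ≤ Cb := le_max_right _ _
  set len := max (M - t₀) (t₀ - m) with hlendef
  have hlen : 0 ≤ len := le_trans (by linarith [h0J.2]) (le_max_left _ _)
  set Q := 8*Ca + 4*Cb with hQdef
  have hQpos : 0 ≤ Q := by positivity
  set ε := min 1 (1/(len*Q+1)) with hεdef
  have hεpos : 0 < ε := lt_min one_pos (by positivity)
  have hε1 : ε ≤ 1 := min_le_left _ _
  have hε2 : ε * (len*Q+1) ≤ 1 := by
    have h1 : ε ≤ 1/(len*Q+1) := min_le_right _ _
    have h2 : (0:ℝ) < len*Q+1 := by positivity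
    calc ε * (len*Q+1) ≤ (1/(len*Q+1)) * (len*Q+1) := by
          apply mul_le_mul_of_nonneg_right h1 h2.le
      _ = 1 := by field_simp
  refine ⟨ε, hεpos, ?_⟩
  intro z hz hz0
  -- Picard-Lindelöf data for the equation in the new variable
  have hpl : IsPicardLindelofOld (fun u w => A₁ u * w^3 + B₁ u * w^2) m t₀ M (z 0)
      ((12*Ca + 4*Cb).toNNReal) ε (Ca*(2*ε)^3 + Cb*(2*ε)^2) := by
    have hball : closedBall (z 0) ε ⊆ closedBall (0:ℝ) (2*ε) := by
      intro w hw
      simp only [mem_closedBall, Real.dist_eq, sub_zero] at hw ⊢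
      have := abs_sub_abs_le_abs_sub w (z 0)
      linarith
    refine ⟨h0J, hεpos.le, ?_, ?_, ?_, ?_⟩
    · intro u hu
      refine ((cubic_lipschitzOnWith (A₁ u) (B₁ u) (2*ε)).mono hball).weaken' ?_
      apply Real.toNNReal_le_toNNReal
      have h1 := hCa u hu
      have h2 := hCb u hu
      have h3 := abs_nonneg (A₁ u)
      have h4 := abs_nonneg (B₁ u)
      have hε2' : ε^2 ≤ 1 := by nlinarith
      nlinarith [mul_le_mul h1 hε2' (sq_nonneg ε) hCapos, mul_le_mul h2 hε1 hεpos.le hCbpos]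
    · intro x hx
      exact ((hA₁.mul continuous_const).add (hB₁.mul continuous_const)).continuousOn
    · intro u hu w hw
      have hw2 : |w| ≤ 2*ε := by
        have := hball hw
        simpa [Real.norm_eq_abs] using mem_closedBall_zero_iff.mp this
      have h1 := hCa u hu
      have h2 := hCb u hu
      rw [Real.norm_eq_abs]
      calc |A₁ u * w^3 + B₁ u * w^2| ≤ |A₁ u| * |w|^3 + |B₁ u| * |w|^2 := by
            rw [← abs_pow, ← abs_pow, ← abs_mul, ← abs_mul]; exact abs_add_le _ _
        _ ≤ Ca*(2*ε)^3 + Cb*(2*ε)^2 := by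
            gcongr <;> first | exact abs_nonneg w | assumption
    · show (Ca*(2*ε)^3 + Cb*(2*ε)^2) * max (M - t₀) (t₀ - m) ≤ ε
      rw [← hlendef]
      have e1 : (Ca*(2*ε)^3 + Cb*(2*ε)^2)*len = ε*(ε*((8*Ca*ε + 4*Cb)*len)) := by ring
      have e2 : 8*Ca*ε + 4*Cb ≤ Q := by
        simp only [hQdef]; nlinarith
      have e3 : ε*((8*Ca*ε+4*Cb)*len) ≤ ε*(Q*len) :=
        mul_le_mul_of_nonneg_left (mul_le_mul_of_nonneg_right e2 hlen) hεpos.le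
      have e4 : ε*(Q*len) ≤ 1 := by nlinarith
      calc (Ca*(2*ε)^3 + Cb*(2*ε)^2)*len = ε*(ε*((8*Ca*ε + 4*Cb)*len)) := e1
        _ ≤ ε*1 := mul_le_mul_of_nonneg_left (e3.trans e4) hεpos.le
        _ = ε := mul_one ε
  obtain ⟨y, hy0, hymem, hy'⟩ := existsSolutionMem (z 0) hpl
  set g : ℝ → ℝ := fun t => y (s t) with hgdef
  have hyc : ContinuousOn y (Icc m M) := fun u hu => (hy' u hu).continuousWithinAt
  have hgc : ContinuousOn g (Icc 0 1) := hyc.comp hscont hmemJ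
  have hgball : ∀ t ∈ Icc (0:ℝ) 1, |g t| < 2 := by
    intro t ht
    have h1 : |y (s t) - z 0| ≤ ε := by
      simpa [Real.dist_eq] using hymem (s t) (hmemJ ht)
    have h2 := abs_sub_abs_le_abs_sub (y (s t)) (z 0)
    show |y (s t)| < 2
    linarith
  have hg0 : g 0 = z 0 := hy0
  have hg' : ∀ t ∈ Icc (0:ℝ) 1, HasDerivWithinAt g (A t * g t^3 + B t * g t^2) (Icc 0 1) t := by
    intro t ht
    have h1 := HasDerivWithinAt.comp t (hy' (s t) (hmemJ ht)) ((hs t ht).hasDerivWithinAt) hmemJ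
    have heq : A t * g t^3 + B t * g t^2
        = (A₁ (s t) * y (s t)^3 + B₁ (s t) * y (s t)^2) * deriv s t := by
      rw [hA t ht, hB t ht]; show _ = _ ; simp only [hgdef]; ring
    rw [heq]; exact h1
  -- bounds for A, B on [0,1]
  have hABc : ContinuousOn (fun t => deriv s t * A₁ (s t)) (Icc 0 1) :=
    hs'.mul (hA₁.comp_continuousOn hscont)
  have hBBc : ContinuousOn (fun t => deriv s t * B₁ (s t)) (Icc 0 1) :=
    hs'.mul (hB₁.comp_continuousOn hscont)
  obtain ⟨CA0, hCA0⟩ := (isCompact_Icc (a := (0:ℝ)) (b := 1)).exists_bound_of_continuousOn hABc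
  obtain ⟨CB0, hCB0⟩ := (isCompact_Icc (a := (0:ℝ)) (b := 1)).exists_bound_of_continuousOn hBBc
  set CA := max CA0 0 with hCAdef
  set CB := max CB0 0 with hCBdef
  have hCA : ∀ t ∈ Icc (0:ℝ) 1, |A t| ≤ CA := by
    intro t ht
    rw [hA t ht]
    have h := hCA0 t ht
    rw [Real.norm_eq_abs] at h
    exact le_trans h (le_max_left _ _)
  have hCB : ∀ t ∈ Icc (0:ℝ) 1, |B t| ≤ CB := by
    intro t ht
    rw [hB t ht]
    have h := hCB0 t ht
    rw [Real.norm_eq_abs] at h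
    exact le_trans h (le_max_left _ _)
  -- the truncated vector field
  set c : ℝ → ℝ := fun t => max 0 (min 1 t) with hcdef
  have hc : ∀ t, c t ∈ Icc (0:ℝ) 1 := fun t => ⟨le_max_left _ _, max_le (by norm_num) (min_le_left _ _)⟩
  have hcid : ∀ t ∈ Icc (0:ℝ) 1, c t = t := by
    intro t ht
    simp only [hcdef]
    rw [min_eq_right ht.2, max_eq_right ht.1]
  set v : ℝ → ℝ → ℝ := fun t w => A (c t) * w^3 + B (c t) * w^2 with hvdef
  have hv : ∀ t, LipschitzOnWith ((12*CA + 4*CB).toNNReal) (v t) (closedBall (0:ℝ) 2) := by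
    intro t
    refine (cubic_lipschitzOnWith (A (c t)) (B (c t)) 2).weaken' ?_
    apply Real.toNNReal_le_toNNReal
    have h1 := hCA (c t) (hc t)
    have h2 := hCB (c t) (hc t)
    nlinarith [abs_nonneg (A (c t)), abs_nonneg (B (c t))]
  -- the sup argument
  have hzc : ContinuousOn z (Icc 0 1) := fun t ht => ((hz t ht).continuousAt).continuousWithinAt
  set U : Set ℝ := {t | t ∈ Icc (0:ℝ) 1 ∧ EqOn z g (Icc 0 t)} with hUdef
  have hU0 : (0:ℝ) ∈ U := by
    refine ⟨by norm_num, ?_⟩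
    intro u hu
    have : u = 0 := le_antisymm hu.2 hu.1
    rw [this, hg0]
  have hUne : U.Nonempty := ⟨0, hU0⟩
  have hUbdd : BddAbove U := ⟨1, fun t htU => htU.1.2⟩
  set T := sSup U with hTdef
  have hT0 : 0 ≤ T := le_csSup hUbdd hU0
  have hT1 : T ≤ 1 := csSup_le hUne (fun t htU => htU.1.2)
  have hIco : ∀ u ∈ Ico (0:ℝ) T, z u = g u := by
    intro u hu
    obtain ⟨t', ht'U, hlt'⟩ := exists_lt_of_lt_csSup hUne hu.2
    exact ht'U.2 ⟨hu.1, hlt'.le⟩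
  have hzTgT : z T = g T := by
    rcases eq_or_lt_of_le hT0 with h0 | h0
    · rw [← h0, hg0]
    · have hmem : Ico (0:ℝ) T ∈ nhdsWithin T (Iio T) := by
        apply mem_nhdsWithin.mpr
        exact ⟨Ioi 0, isOpen_Ioi, h0, fun u hu => ⟨hu.1.le, hu.2⟩⟩
      have hev : z =ᶠ[nhdsWithin T (Iio T)] g :=
        Filter.eventuallyEq_of_mem hmem (fun u hu => hIco u hu)
      have hzt : Filter.Tendsto z (nhdsWithin T (Iio T)) (nhds (z T)) :=
        ((hz T ⟨hT0, hT1⟩).continuousAt.tendsto).mono_left nhdsWithin_le_nhds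
      have hgt : Filter.Tendsto g (nhdsWithin T (Iio T)) (nhds (g T)) := by
        rw [← nhdsWithin_Ioo_eq_nhdsLT h0]
        exact (hgc T ⟨hT0, hT1⟩).tendsto.mono_left
          (nhdsWithin_mono _ (fun u hu => ⟨hu.1.le, hu.2.le.trans hT1⟩))
      have hzt' : Filter.Tendsto z (nhdsWithin T (Iio T)) (nhds (g T)) := by
        exact hgt.congr' hev.symm
      exact tendsto_nhds_unique hzt hzt'
  have hTeq : EqOn z g (Icc 0 T) := by
    intro u hu
    rcases eq_or_lt_of_le hu.2 with he | hlt
    · rw [he]; exact hzTgT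
    · exact hIco u ⟨hu.1, hlt⟩
  have hTfin : T = 1 := by
    by_contra hTne
    have hTlt : T < 1 := lt_of_le_of_ne hT1 hTne
    have hzT2 : |z T| < 2 := by
      rw [hTeq ⟨hT0, le_refl T⟩]; exact hgball T ⟨hT0, hT1⟩
    obtain ⟨δ', hδ'pos, hδ'⟩ := Metric.continuousAt_iff.mp
      ((hz T ⟨hT0, hT1⟩).continuousAt) (2 - |z T|) (by linarith)
    set δ := min (δ'/2) (1 - T) with hδdef
    have hδpos : 0 < δ := lt_min (by linarith) (by linarith)
    have hTδ1 : T + δ ≤ 1 := by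
      have := min_le_right (δ'/2) (1-T); simp only [hδdef] at *; linarith
    have hsub : Icc T (T+δ) ⊆ Icc (0:ℝ) 1 :=
      fun u hu => ⟨le_trans hT0 hu.1, le_trans hu.2 hTδ1⟩
    have hzball : ∀ u ∈ Icc T (T+δ), z u ∈ closedBall (0:ℝ) 2 := by
      intro u hu
      have h1 : dist u T < δ' := by
        rw [Real.dist_eq]
        have h2 : |u - T| ≤ δ := abs_le.mpr ⟨by linarith [hu.1], by linarith [hu.2]⟩
        have h3 := min_le_left (δ'/2) (1-T)
        calc |u - T| ≤ δ := h2
          _ ≤ δ'/2 := by rw [hδdef]; exact min_le_left _ _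
          _ < δ' := by linarith
      have h2 := hδ' h1
      rw [Real.dist_eq] at h2
      have h3 := abs_sub_abs_le_abs_sub (z u) (z T)
      simp only [mem_closedBall, Real.dist_eq, sub_zero]
      linarith
    have hequ : EqOn z g (Icc T (T+δ)) := by
      apply ODE_solution_unique_of_mem_Icc_right (fun t _ => hv t) (hzc.mono hsub) ?_ ?_ (hgc.mono hsub) ?_ ?_
        (hTeq ⟨hT0, le_refl T⟩)
      · intro t ht
        have ht01 : t ∈ Icc (0:ℝ) 1 := hsub (Ico_subset_Icc_self ht)
        have h1 := (hz t ht01).hasDerivWithinAt (s := Ici t)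
        have h2 : v t (z t) = A t * z t^3 + B t * z t^2 := by
          simp only [hvdef, hcid t ht01]
        rw [h2]; exact h1
      · intro t ht
        exact hzball t (Ico_subset_Icc_self ht)
      · intro t ht
        have ht01 : t ∈ Icc (0:ℝ) 1 := hsub (Ico_subset_Icc_self ht)
        have htlt1 : t < 1 := lt_of_lt_of_le ht.2 hTδ1
        have hmem : Icc (0:ℝ) 1 ∈ nhdsWithin t (Ici t) := by
          apply mem_nhdsWithin.mpr
          exact ⟨Iio 1, isOpen_Iio, htlt1, fun u hu => ⟨le_trans ht01.1 hu.2, hu.1.le⟩⟩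
        have h1 := (hg' t ht01).mono_of_mem_nhdsWithin hmem
        have h2 : v t (g t) = A t * g t^3 + B t * g t^2 := by
          simp only [hvdef, hcid t ht01]
        rw [h2]; exact h1
      · intro t ht
        have := hgball t (hsub (Ico_subset_Icc_self ht))
        simp only [mem_closedBall, Real.dist_eq, sub_zero]
        linarith
    have hTδU : T + δ ∈ U := by
      refine ⟨⟨by linarith, hTδ1⟩, ?_⟩
      intro u hu
      rcases le_total u T with h | h
      · exact hTeq ⟨hu.1, h⟩
      · exact hequ ⟨h, hu.2⟩
    have := le_csSup hUbdd hTδU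
    rw [← hTdef] at this
    linarith
  have hz1 : z 1 = g 1 := hTeq (by rw [hTfin]; exact ⟨by norm_num, le_refl 1⟩)
  have hg1 : g 1 = z 0 := by
    show y (s 1) = z 0
    rw [← hsper]; exact hy0
  rw [hz1, hg1]
end

section
/- Let A, B : [0,1] → ℝ be continuous piecewise linear functions with nodes at t_k = k/n, with slopes m_k and n_k respectively on [t_{k-1}, t_k]. If A(1/2) = B(1/2) = 0, m_k = m_{n+1-k}, and n_k = n_{n+1-k} for all k, then z = 0 is a center for z' = A(t)z³ + B(t)z²: there exists ε > 0 such that every solution with |z(0)| < ε satisfies z(0) = z(1). -/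
open Set

/-- A piecewise affine function with symmetric slopes satisfies
    `A t + A (1 - t) = A 0 + A 1` on `[0,1]`. -/
lemma aux_sym_const (n : ℕ) (hn : 1 ≤ n) (A : ℝ → ℝ) (m : ℕ → ℝ)
    (haff : ∀ k, 1 ≤ k → k ≤ n →
      ∀ t ∈ Icc (((k:ℝ)-1)/n) ((k:ℝ)/n),
        A t = A (((k:ℝ)-1)/n) + m k * (t - ((k:ℝ)-1)/n))
    (hsym : ∀ k, 1 ≤ k → k ≤ n → m k = m (n + 1 - k)) :
    ∀ t ∈ Icc (0:ℝ) 1, A t + A (1 - t) = A 0 + A 1 := by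
  have hn1 : (1:ℝ) ≤ n := by exact_mod_cast hn
  have hn0 : (0:ℝ) < n := by linarith
  have hne : (n:ℝ) ≠ 0 := ne_of_gt hn0
  set c : ℕ → ℝ := fun k => A (((k:ℝ)-1)/n) + A (((n:ℝ)-k)/n) + m k / n with hc
  -- On each subinterval, `A t + A (1-t)` equals the constant `c k`.
  have key : ∀ k, 1 ≤ k → k ≤ n → ∀ t ∈ Icc (((k:ℝ)-1)/n) ((k:ℝ)/n),
      A t + A (1 - t) = c k := by
    intro k h1 h2 t ht
    have ht1 : ((k:ℝ)-1) ≤ t*n := by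
      have := ht.1; rw [div_le_iff₀ hn0] at this; linarith
    have ht2 : t*n ≤ (k:ℝ) := by
      have := ht.2; rw [le_div_iff₀ hn0] at this; linarith
    have hcast : ((n + 1 - k : ℕ) : ℝ) = (n:ℝ) + 1 - k := by
      rw [Nat.cast_sub (by omega)]; push_cast; ring
    have hmem : (1 - t) ∈ Icc ((((n + 1 - k : ℕ):ℝ) - 1)/(n:ℝ)) (((n + 1 - k : ℕ):ℝ)/(n:ℝ)) := by
      rw [hcast, mem_Icc]
      constructor
      · rw [div_le_iff₀ hn0]; nlinarith
      · rw [le_div_iff₀ hn0]; nlinarith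
    have h2' := haff (n+1-k) (by omega) (by omega) (1-t) hmem
    rw [hcast] at h2'
    have harg : ((n:ℝ) + 1 - (k:ℝ) - 1)/(n:ℝ) = ((n:ℝ)-k)/n := by ring
    rw [harg] at h2'
    rw [haff k h1 h2 t ht, h2', ← hsym k h1 h2]
    simp only [hc]
    field_simp
    ring
  -- The constants agree across adjacent intervals.
  have chain : ∀ k, 1 ≤ k → k ≤ n → c k = c 1 := by
    intro k
    induction k with
    | zero => intro h; omega
    | succ k ih =>
      intro _ h2
      rcases Nat.eq_zero_or_pos k with hk0 | hk1
      · subst hk0; rfl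
      · have hmem1 : ((k:ℝ)/n) ∈ Icc (((k:ℝ)-1)/n) ((k:ℝ)/n) := by
          rw [mem_Icc]
          refine ⟨?_, le_rfl⟩
          rw [div_le_div_iff_of_pos_right hn0]; nlinarith
        have hmem2 : ((k:ℝ)/n) ∈ Icc ((((k+1:ℕ):ℝ)-1)/(n:ℝ)) (((k+1:ℕ):ℝ)/(n:ℝ)) := by
          rw [mem_Icc]
          constructor
          · push_cast
            rw [div_le_div_iff_of_pos_right hn0]; nlinarith
          · push_cast
            rw [div_le_div_iff_of_pos_right hn0]; nlinarith
        have e1 := key k hk1 (by omega) ((k:ℝ)/n) hmem1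
        have e2 := key (k+1) (by omega) h2 ((k:ℝ)/n) hmem2
        rw [← e2, e1]
        exact ih hk1 (by omega)
  -- Every point of `[0,1]` lies in some subinterval.
  have cover : ∀ t ∈ Icc (0:ℝ) 1, ∃ k, 1 ≤ k ∧ k ≤ n ∧
      t ∈ Icc (((k:ℝ)-1)/n) ((k:ℝ)/n) := by
    intro t ht
    have h0 : 0 ≤ t * n := mul_nonneg ht.1 hn0.le
    by_cases hk : ⌊t*n⌋₊ + 1 ≤ n
    · refine ⟨⌊t*n⌋₊ + 1, by omega, hk, ?_⟩
      rw [mem_Icc]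
      constructor
      · rw [div_le_iff₀ hn0]
        push_cast
        have := Nat.floor_le h0
        linarith
      · rw [le_div_iff₀ hn0]
        push_cast
        have := Nat.lt_floor_add_one (t*n)
        linarith
    · refine ⟨n, hn, le_rfl, ?_⟩
      have hnk : (n:ℝ) ≤ (⌊t*n⌋₊ : ℝ) := by exact_mod_cast (by omega : n ≤ ⌊t*n⌋₊)
      have h2 : (n:ℝ) ≤ t*n := le_trans hnk (Nat.floor_le h0)
      have ht1 : t = 1 := le_antisymm ht.2 (by nlinarith)
      rw [ht1, mem_Icc]
      constructor
      · rw [div_le_iff₀ hn0]; linarith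
      · rw [le_div_iff₀ hn0]; linarith
  have hconst : ∀ t ∈ Icc (0:ℝ) 1, A t + A (1-t) = c 1 := by
    intro t ht
    obtain ⟨k, h1, h2, hm⟩ := cover t ht
    rw [key k h1 h2 t hm, chain k h1 h2]
  intro t ht
  have h01 := hconst 0 ⟨le_rfl, by norm_num⟩
  rw [show (1:ℝ) - 0 = 1 by norm_num] at h01
  rw [hconst t ht, h01]

set_option maxHeartbeats 1000000 in
theorem stmt_5 (n : ℕ) (hn : 1 ≤ n) (A B : ℝ → ℝ) (m nn : ℕ → ℝ)
    (hA : ContinuousOn A (Icc 0 1)) (hB : ContinuousOn B (Icc 0 1))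
    (haffA : ∀ k, 1 ≤ k → k ≤ n →
      ∀ t ∈ Icc (((k:ℝ)-1)/n) ((k:ℝ)/n),
        A t = A (((k:ℝ)-1)/n) + m k * (t - ((k:ℝ)-1)/n))
    (haffB : ∀ k, 1 ≤ k → k ≤ n →
      ∀ t ∈ Icc (((k:ℝ)-1)/n) ((k:ℝ)/n),
        B t = B (((k:ℝ)-1)/n) + nn k * (t - ((k:ℝ)-1)/n))
    (hmidA : A (1/2) = 0) (hmidB : B (1/2) = 0)
    (hsymA : ∀ k, 1 ≤ k → k ≤ n → m k = m (n + 1 - k))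
    (hsymB : ∀ k, 1 ≤ k → k ≤ n → nn k = nn (n + 1 - k)) :
    ∃ ε > (0:ℝ), ∀ z : ℝ → ℝ,
      (∀ t ∈ Icc (0:ℝ) 1, HasDerivAt z (A t * z t ^ 3 + B t * z t ^ 2) t) →
      |z 0| < ε → z 0 = z 1 := by
  -- A and B are odd about `t = 1/2`.
  have hA0 : A 0 + A 1 = 0 := by
    have h := aux_sym_const n hn A m haffA hsymA (1/2) (by norm_num)
    rw [show (1:ℝ) - 1/2 = 1/2 by norm_num, hmidA] at h
    linarith
  have hB0 : B 0 + B 1 = 0 := by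
    have h := aux_sym_const n hn B nn haffB hsymB (1/2) (by norm_num)
    rw [show (1:ℝ) - 1/2 = 1/2 by norm_num, hmidB] at h
    linarith
  have hAsym : ∀ t ∈ Icc (0:ℝ) 1, A (1-t) = -A t := by
    intro t ht
    have := aux_sym_const n hn A m haffA hsymA t ht
    linarith
  have hBsym : ∀ t ∈ Icc (0:ℝ) 1, B (1-t) = -B t := by
    intro t ht
    have := aux_sym_const n hn B nn haffB hsymB t ht
    linarith
  refine ⟨1, one_pos, ?_⟩
  intro z hz _
  -- z is continuous and bounded on [0,1]; A, B are bounded.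
  have hzc : ContinuousOn z (Icc 0 1) := fun t ht =>
    (hz t ht).continuousAt.continuousWithinAt
  obtain ⟨R0, hR0'⟩ := isCompact_Icc.exists_bound_of_continuousOn hzc
  obtain ⟨MA0, hMA0'⟩ := isCompact_Icc.exists_bound_of_continuousOn hA
  obtain ⟨MB0, hMB0'⟩ := isCompact_Icc.exists_bound_of_continuousOn hB
  set R : ℝ := max R0 0 with hRdef
  set MA : ℝ := max MA0 0 with hMAdef
  set MB : ℝ := max MB0 0 with hMBdef
  have hRnn : 0 ≤ R := le_max_right _ _
  have hMAnn : 0 ≤ MA := le_max_right _ _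
  have hMBnn : 0 ≤ MB := le_max_right _ _
  have hR : ∀ t ∈ Icc (0:ℝ) 1, |z t| ≤ R := by
    intro t ht
    have := hR0' t ht
    rw [Real.norm_eq_abs] at this
    exact this.trans (le_max_left _ _)
  have hMA : ∀ t ∈ Icc (0:ℝ) 1, |A t| ≤ MA := by
    intro t ht
    have := hMA0' t ht
    rw [Real.norm_eq_abs] at this
    exact this.trans (le_max_left _ _)
  have hMB : ∀ t ∈ Icc (0:ℝ) 1, |B t| ≤ MB := by
    intro t ht
    have := hMB0' t ht
    rw [Real.norm_eq_abs] at this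
    exact this.trans (le_max_left _ _)
  set K : NNReal := ⟨3*MA*R^2 + 2*MB*R, by positivity⟩ with hK
  -- Lipschitz bound for the vector field.
  have hv : ∀ t, LipschitzOnWith K (fun x : ℝ => A t * x^3 + B t * x^2)
      (if t ∈ Icc (0:ℝ) 1 then {x : ℝ | |x| ≤ R} else (∅ : Set ℝ)) := by
    intro t
    by_cases ht : t ∈ Icc (0:ℝ) 1
    · rw [if_pos ht, lipschitzOnWith_iff_dist_le_mul]
      intro x hx y hy
      simp only [mem_setOf_eq] at hx hy
      rw [Real.dist_eq, Real.dist_eq]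
      have hre : A t * x ^ 3 + B t * x ^ 2 - (A t * y ^ 3 + B t * y ^ 2)
          = A t * ((x - y) * (x^2 + x*y + y^2)) + B t * ((x - y) * (x + y)) := by ring
      rw [hre]
      have hKcoe : (K : ℝ) = 3*MA*R^2 + 2*MB*R := rfl
      rw [hKcoe]
      have hMA' := hMA t ht
      have hMB' := hMB t ht
      have b1 : |x^2 + x*y + y^2| ≤ 3*R^2 := by
        have hxy : |x*y| ≤ R*R := by
          rw [abs_mul]; exact mul_le_mul hx hy (abs_nonneg _) hRnn
        have h3 := abs_add_le (x^2 + x*y) (y^2)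
        have h4 := abs_add_le (x^2) (x*y)
        have hx2 : |x^2| ≤ R^2 := by
          rw [abs_of_nonneg (sq_nonneg x)]
          nlinarith [abs_nonneg x, sq_abs x]
        have hy2 : |y^2| ≤ R^2 := by
          rw [abs_of_nonneg (sq_nonneg y)]
          nlinarith [abs_nonneg y, sq_abs y]
        nlinarith
      have b2 : |x + y| ≤ 2*R := (abs_add_le x y).trans (by linarith)
      calc |A t * ((x - y) * (x^2 + x*y + y^2)) + B t * ((x - y) * (x + y))|
          ≤ |A t * ((x - y) * (x^2 + x*y + y^2))| + |B t * ((x - y) * (x + y))| :=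
            abs_add_le _ _
        _ = |A t| * (|x - y| * |x^2 + x*y + y^2|) + |B t| * (|x - y| * |x + y|) := by
            rw [abs_mul, abs_mul, abs_mul, abs_mul]
        _ ≤ MA * (|x - y| * (3*R^2)) + MB * (|x - y| * (2*R)) := by
            gcongr
        _ = (3*MA*R^2 + 2*MB*R) * |x - y| := by ring
    · rw [if_neg ht]
      exact lipschitzOnWith_empty _ _
  -- The reflected function solves the same ODE.
  have hw' : ∀ t ∈ Icc (0:ℝ) 1,
      HasDerivAt (fun s : ℝ => z (1 - s)) (A t * (z (1-t))^3 + B t * (z (1-t))^2) t := by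
    intro t ht
    have h1t : (1:ℝ) - t ∈ Icc (0:ℝ) 1 := ⟨by linarith [ht.2], by linarith [ht.1]⟩
    have hinner : HasDerivAt (fun s : ℝ => 1 - s) (-1) t := by
      simpa using (hasDerivAt_id t).const_sub 1
    have hcomp : HasDerivAt (fun s : ℝ => z (1 - s))
        ((A (1-t) * z (1-t) ^ 3 + B (1-t) * z (1-t) ^ 2) * (-1)) t :=
      HasDerivAt.comp t (hz (1-t) h1t) hinner
    have heq : (A (1-t) * z (1-t) ^ 3 + B (1-t) * z (1-t) ^ 2) * (-1)
        = A t * (z (1-t))^3 + B t * (z (1-t))^2 := by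
      rw [hAsym t ht, hBsym t ht]; ring
    rwa [heq] at hcomp
  -- Uniqueness of solutions on [1/2, 1].
  have huniq : EqOn z (fun s : ℝ => z (1 - s)) (Icc (1/2 : ℝ) 1) := by
    apply ODE_solution_unique_of_mem_Icc_right
      (v := fun t x => A t * x^3 + B t * x^2)
      (s := fun t => if t ∈ Icc (0:ℝ) 1 then {x : ℝ | |x| ≤ R} else (∅ : Set ℝ))
      (K := K) (fun t _ => hv t)
    · exact hzc.mono (Icc_subset_Icc (by norm_num) le_rfl)
    · intro t ht
      have ht01 : t ∈ Icc (0:ℝ) 1 := ⟨by linarith [ht.1], ht.2.le⟩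
      exact (hz t ht01).hasDerivWithinAt
    · intro t ht
      have ht01 : t ∈ Icc (0:ℝ) 1 := ⟨by linarith [ht.1], ht.2.le⟩
      simp only [if_pos ht01, mem_setOf_eq]
      exact hR t ht01
    · exact hzc.comp (Continuous.continuousOn (by continuity))
        (fun t ht => ⟨by linarith [ht.2], by linarith [ht.1]⟩)
    · intro t ht
      have ht01 : t ∈ Icc (0:ℝ) 1 := ⟨by linarith [ht.1], ht.2.le⟩
      exact (hw' t ht01).hasDerivWithinAt
    · intro t ht
      have ht01 : t ∈ Icc (0:ℝ) 1 := ⟨by linarith [ht.1], ht.2.le⟩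
      have h1t : (1:ℝ) - t ∈ Icc (0:ℝ) 1 := ⟨by linarith [ht.2], by linarith [ht.1]⟩
      simp only [if_pos ht01, mem_setOf_eq]
      exact hR (1-t) h1t
    · show z (1/2) = z (1 - 1/2)
      norm_num
  have := huniq ⟨by norm_num, le_rfl⟩
  simp only [show (1:ℝ) - 1 = 0 by norm_num] at this
  exact this.symm
end

section
/- For the quartic equation z' = z⁴ + A(t)z³ + B(t)z² with continuous A, B, define B̄(t) = ∫₀ᵗ B and suppose ∫₀¹ B = 0 and ∫₀¹ A = 0. If additionally ∫₀¹ [A(t)B̄(t) + 1] dt ≠ 0, then the solution z = 0 is an isolated periodic solution of multiplicity 4, i.e., V₂(1) = V₃(1) = 0 and V₄(1) ≠ 0, where V_k are defined by V₁ ≡ 1 and V_k(t) = -k∫₀ᵗ [B V_{k-1} + A V_{k-2} + V_{k-3}] (with V₀ = V_{-1} = 0). -/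
open Set intervalIntegral MeasureTheory

lemma ftc_deriv (f : ℝ → ℝ) (hf : Continuous f) (t : ℝ) :
    HasDerivAt (fun u => ∫ s in (0:ℝ)..u, f s) (f t) t :=
  integral_hasDerivAt_right (hf.intervalIntegrable 0 t)
    hf.aestronglyMeasurable.stronglyMeasurableAtFilter hf.continuousAt

theorem stmt_16 (A B V₁ V₂ V₃ V₄ : ℝ → ℝ)
    (hA : ContinuousOn A (Icc 0 1)) (hB : ContinuousOn B (Icc 0 1))
    (hV₁ : ∀ t : ℝ, V₁ t = 1)
    (hV₂ : ∀ t : ℝ, V₂ t = -2 * ∫ s in (0:ℝ)..t, B s * V₁ s)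
    (hV₃ : ∀ t : ℝ, V₃ t = -3 * ∫ s in (0:ℝ)..t, (B s * V₂ s + A s * V₁ s))
    (hV₄ : ∀ t : ℝ, V₄ t = -4 * ∫ s in (0:ℝ)..t, (B s * V₃ s + A s * V₂ s + V₁ s))
    (hBint : (∫ s in (0:ℝ)..1, B s) = 0)
    (hAint : (∫ s in (0:ℝ)..1, A s) = 0)
    (hη₄ : (∫ t in (0:ℝ)..1, (A t * (∫ s in (0:ℝ)..t, B s) + 1)) ≠ 0) :
    V₂ 1 = 0 ∧ V₃ 1 = 0 ∧ V₄ 1 ≠ 0 := by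
  have h01 : (0:ℝ) ≤ 1 := zero_le_one
  set A' : ℝ → ℝ := IccExtend h01 ((Icc (0:ℝ) 1).restrict A) with hA'def
  set B' : ℝ → ℝ := IccExtend h01 ((Icc (0:ℝ) 1).restrict B) with hB'def
  have hA'c : Continuous A' := (continuousOn_iff_continuous_restrict.mp hA).Icc_extend'
  have hB'c : Continuous B' := (continuousOn_iff_continuous_restrict.mp hB).Icc_extend'
  have hA'eq : ∀ t ∈ Icc (0:ℝ) 1, A' t = A t := fun t ht => by
    simp [hA'def, IccExtend_of_mem h01 _ ht]; rfl
  have hB'eq : ∀ t ∈ Icc (0:ℝ) 1, B' t = B t := fun t ht => by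
    simp [hB'def, IccExtend_of_mem h01 _ ht]; rfl
  set F : ℝ → ℝ := fun t => ∫ s in (0:ℝ)..t, B' s with hFdef
  set G : ℝ → ℝ := fun t => ∫ s in (0:ℝ)..t, A' s with hGdef
  have hFd : ∀ t, HasDerivAt F (B' t) t := ftc_deriv B' hB'c
  have hGd : ∀ t, HasDerivAt G (A' t) t := ftc_deriv A' hA'c
  have hFc : Continuous F := continuous_iff_continuousAt.mpr fun t => (hFd t).continuousAt
  have hGc : Continuous G := continuous_iff_continuousAt.mpr fun t => (hGd t).continuousAt
  -- integrals of B', A' over subintervals of [0,1] agree with B, A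
  have hsub : ∀ t ∈ Icc (0:ℝ) 1, uIcc (0:ℝ) t ⊆ Icc 0 1 := by
    intro t ht
    rw [uIcc_of_le ht.1]
    exact Icc_subset_Icc le_rfl ht.2
  have hFB : ∀ t ∈ Icc (0:ℝ) 1, F t = ∫ s in (0:ℝ)..t, B s := by
    intro t ht
    exact integral_congr fun s hs => hB'eq s (hsub t ht hs)
  have hGA : ∀ t ∈ Icc (0:ℝ) 1, G t = ∫ s in (0:ℝ)..t, A s := by
    intro t ht
    exact integral_congr fun s hs => hA'eq s (hsub t ht hs)
  have h1 : (1:ℝ) ∈ Icc (0:ℝ) 1 := ⟨h01, le_rfl⟩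
  have hF1 : F 1 = 0 := by rw [hFB 1 h1, hBint]
  have hG1 : G 1 = 0 := by rw [hGA 1 h1, hAint]
  -- V₂ on [0,1]
  have eq2 : ∀ t ∈ Icc (0:ℝ) 1, V₂ t = -2 * F t := by
    intro t ht
    rw [hV₂]
    congr 1
    rw [hFB t ht]
    exact integral_congr fun s _ => by rw [hV₁, mul_one]
  -- V₃ on [0,1]
  have eq3 : ∀ t ∈ Icc (0:ℝ) 1, V₃ t = 3 * (F t) ^ 2 - 3 * G t := by
    intro t ht
    rw [hV₃]
    have hcong : (∫ s in (0:ℝ)..t, (B s * V₂ s + A s * V₁ s))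
        = ∫ s in (0:ℝ)..t, (B' s * (-2 * F s) + A' s) := by
      refine integral_congr fun s hs => ?_
      have hs1 := hsub t ht hs
      rw [hB'eq s hs1, hA'eq s hs1, eq2 s hs1, hV₁, mul_one]
    rw [hcong]
    have hanti : ∀ s ∈ uIcc (0:ℝ) t,
        HasDerivAt (fun u => -(F u) ^ 2 + G u) (B' s * (-2 * F s) + A' s) s := by
      intro s _
      have := (((hFd s).pow 2).neg).add (hGd s)
      exact this.congr_deriv (by push_cast; ring)
    have hint : IntervalIntegrable (fun s => B' s * (-2 * F s) + A' s) volume 0 t :=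
      ((hB'c.mul (continuous_const.mul hFc)).add hA'c).intervalIntegrable 0 t
    rw [integral_eq_sub_of_hasDerivAt hanti hint]
    simp [hFdef, hGdef]
    ring
  have hV₂1 : V₂ 1 = 0 := by rw [eq2 1 h1, hF1]; ring
  have hV₃1 : V₃ 1 = 0 := by rw [eq3 1 h1, hF1, hG1]; ring
  refine ⟨hV₂1, hV₃1, ?_⟩
  -- V₄ 1 = -4 * η₄
  rw [hV₄]
  have hcong : (∫ s in (0:ℝ)..1, (B s * V₃ s + A s * V₂ s + V₁ s))
      = ∫ s in (0:ℝ)..1,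
        ((B' s * (3 * (F s) ^ 2 - 3 * G s) + A' s * (-2 * F s) + 1)) := by
    refine integral_congr fun s hs => ?_
    have hs1 := hsub 1 h1 hs
    rw [hB'eq s hs1, hA'eq s hs1, eq2 s hs1, eq3 s hs1, hV₁]
  rw [hcong]
  -- split: integrand = H' + (A' F + 1) with H = F^3 - 3 F G
  have hsplit : (∫ s in (0:ℝ)..1,
        (B' s * (3 * (F s) ^ 2 - 3 * G s) + A' s * (-2 * F s) + 1))
      = (∫ s in (0:ℝ)..1,
          (3 * (F s) ^ 2 * B' s - 3 * (B' s * G s + F s * A' s)))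
        + ∫ s in (0:ℝ)..1, (A' s * F s + 1) := by
    rw [← intervalIntegral.integral_add]
    · exact integral_congr fun s _ => by ring
    · exact (((continuous_const.mul (hFc.pow 2)).mul hB'c).sub
        (continuous_const.mul ((hB'c.mul hGc).add (hFc.mul hA'c)))).intervalIntegrable 0 1
    · exact ((hA'c.mul hFc).add continuous_const).intervalIntegrable 0 1
  rw [hsplit]
  have hanti : ∀ s ∈ uIcc (0:ℝ) 1,
      HasDerivAt (fun u => (F u) ^ 3 - 3 * (F u * G u))
        (3 * (F s) ^ 2 * B' s - 3 * (B' s * G s + F s * A' s)) s := by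
    intro s _
    have := ((hFd s).pow 3).sub (((hFd s).mul (hGd s)).const_mul 3)
    exact this.congr_deriv (by push_cast; ring)
  have hint : IntervalIntegrable
      (fun s => 3 * (F s) ^ 2 * B' s - 3 * (B' s * G s + F s * A' s)) volume 0 1 :=
    (((continuous_const.mul (hFc.pow 2)).mul hB'c).sub
        (continuous_const.mul ((hB'c.mul hGc).add (hFc.mul hA'c)))).intervalIntegrable 0 1
  rw [integral_eq_sub_of_hasDerivAt hanti hint]
  have hF0 : F 0 = 0 := by simp [hFdef]
  have hG0 : G 0 = 0 := by simp [hGdef]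
  have hη : (∫ s in (0:ℝ)..1, (A' s * F s + 1))
      = ∫ t in (0:ℝ)..1, (A t * (∫ s in (0:ℝ)..t, B s) + 1) := by
    refine integral_congr fun s hs => ?_
    have hs1 := hsub 1 h1 hs
    rw [hA'eq s hs1, hFB s hs1]
  rw [hF1, hG1, hF0, hG0, hη]
  simpa using hη₄
end

section
/- Let A, B : [0,1] → ℝ be continuous with A(1/2 + t) = -A(1/2 - t) and B(1/2 + t) = -B(1/2 - t) for t ∈ [0, 1/2]. Then for every n ≥ 1, the function V_n defined by V₁ ≡ 1, V₂(t) = -2∫₀ᵗ B, V_k(t) = -k∫₀ᵗ [B V_{k-1} + A V_{k-2}] satisfies V_n(1) = 0 for all n ≥ 2. -/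
open Set

/-- If `g` is continuous on `[0,1]` and antisymmetric about `1/2`, then its primitive is
symmetric about `1/2`. -/
lemma prim_sym (g : ℝ → ℝ) (hg : ContinuousOn g (Icc 0 1))
    (hsym : ∀ s ∈ Icc (0:ℝ) 1, g (1 - s) = - g s) :
    ∀ t ∈ Icc (0:ℝ) 1, (∫ s in (0:ℝ)..(1 - t), g s) = ∫ s in (0:ℝ)..t, g s := by
  intro t ht
  have hInt : MeasureTheory.IntegrableOn g (Icc 0 1) := hg.integrableOn_Icc
  have hii : ∀ a b : ℝ, a ∈ Icc (0:ℝ) 1 → b ∈ Icc (0:ℝ) 1 → IntervalIntegrable g MeasureTheory.volume a b := by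
    intro a b ha hb
    refine (hInt.mono_set ?_).intervalIntegrable
    exact uIcc_subset_Icc ha hb
  have hsub : ∀ a b : ℝ, a ∈ Icc (0:ℝ) 1 → b ∈ Icc (0:ℝ) 1 →
      (∫ s in a..b, g (1 - s)) = - ∫ s in a..b, g s := by
    intro a b ha hb
    rw [← intervalIntegral.integral_neg]
    refine intervalIntegral.integral_congr fun s hs => ?_
    exact hsym s (uIcc_subset_Icc ha hb hs)
  have h1t : (1 : ℝ) - t ∈ Icc (0:ℝ) 1 := ⟨by linarith [ht.2], by linarith [ht.1]⟩
  have h01 : (0:ℝ) ∈ Icc (0:ℝ) 1 := by constructor <;> norm_num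
  have h11 : (1:ℝ) ∈ Icc (0:ℝ) 1 := by constructor <;> norm_num
  -- ∫₀¹ g = 0
  have hF1 : (∫ s in (0:ℝ)..1, g s) = 0 := by
    have h := intervalIntegral.integral_comp_sub_left g 1 (a := 0) (b := 1)
    rw [hsub 0 1 h01 h11] at h
    norm_num at h
    linarith [h]
  -- ∫_{1-t}^1 g = -∫₀ᵗ g
  have h2 : (∫ s in (1 - t : ℝ)..1, g s) = - ∫ s in (0:ℝ)..t, g s := by
    have h := intervalIntegral.integral_comp_sub_left g 1 (a := 0) (b := t)
    rw [hsub 0 t h01 ht] at h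
    norm_num at h
    linarith [h]
  have hadd : (∫ s in (0:ℝ)..(1 - t), g s) + (∫ s in (1 - t : ℝ)..1, g s)
      = ∫ s in (0:ℝ)..1, g s :=
    intervalIntegral.integral_add_adjacent_intervals (hii 0 (1 - t) h01 h1t)
      (hii (1 - t) 1 h1t h11)
  rw [h2, hF1] at hadd
  linarith

theorem stmt_19 (A B : ℝ → ℝ) (V : ℕ → ℝ → ℝ)
    (hA : ContinuousOn A (Icc 0 1)) (hB : ContinuousOn B (Icc 0 1))
    (hAsym : ∀ t ∈ Icc (0:ℝ) (1/2), A (1/2 + t) = -A (1/2 - t))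
    (hBsym : ∀ t ∈ Icc (0:ℝ) (1/2), B (1/2 + t) = -B (1/2 - t))
    (hV1 : ∀ t : ℝ, V 1 t = 1)
    (hV2 : ∀ t : ℝ, V 2 t = -2 * ∫ s in (0:ℝ)..t, B s)
    (hVk : ∀ k : ℕ, 3 ≤ k → ∀ t : ℝ,
      V k t = -(k:ℝ) * ∫ s in (0:ℝ)..t, (B s * V (k-1) s + A s * V (k-2) s)) :
    ∀ n : ℕ, 2 ≤ n → V n 1 = 0 := by
  -- antisymmetry of A, B about 1/2 rewritten as `f (1 - s) = - f s`
  have anti : ∀ (f : ℝ → ℝ), (∀ t ∈ Icc (0:ℝ) (1/2), f (1/2 + t) = -f (1/2 - t)) →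
      ∀ s ∈ Icc (0:ℝ) 1, f (1 - s) = - f s := by
    intro f hf s hs
    rcases le_total s (1/2) with h | h
    · have := hf (1/2 - s) ⟨by linarith, by linarith [hs.1]⟩
      have e1 : (1:ℝ)/2 + (1/2 - s) = 1 - s := by ring
      have e2 : (1:ℝ)/2 - (1/2 - s) = s := by ring
      rwa [e1, e2] at this
    · have := hf (s - 1/2) ⟨by linarith, by linarith [hs.2]⟩
      have e1 : (1:ℝ)/2 + (s - 1/2) = s := by ring
      have e2 : (1:ℝ)/2 - (s - 1/2) = 1 - s := by ring
      rw [e1, e2] at this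
      linarith
  have hAanti := anti A hAsym
  have hBanti := anti B hBsym
  -- main induction: continuity and symmetry of each V k
  have main : ∀ k : ℕ, 1 ≤ k →
      ContinuousOn (V k) (Icc 0 1) ∧ ∀ t ∈ Icc (0:ℝ) 1, V k (1 - t) = V k t := by
    intro k
    induction k using Nat.strong_induction_on with
    | _ k ih =>
      intro hk1
      rcases eq_or_lt_of_le hk1 with h1 | h1
      · -- k = 1
        have hk : k = 1 := h1.symm
        subst hk
        have hVe : V 1 = fun _ => (1:ℝ) := funext hV1
        constructor
        · rw [hVe]; exact continuousOn_const
        · intro t _; rw [hV1, hV1]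
      rcases eq_or_lt_of_le (Nat.succ_le_of_lt h1) with h2 | h2
      · -- k = 2
        have hk : k = 2 := h2.symm
        subst hk
        have hVe : V 2 = fun t => -2 * ∫ s in (0:ℝ)..t, B s := funext hV2
        constructor
        · rw [hVe]
          refine continuousOn_const.mul ?_
          have := intervalIntegral.continuousOn_primitive_interval
            (a := (0:ℝ)) (b := 1) (f := B) (μ := MeasureTheory.volume) ?_
          · simpa [uIcc_of_le (by norm_num : (0:ℝ) ≤ 1)] using this
          · simpa [uIcc_of_le (by norm_num : (0:ℝ) ≤ 1)] using hB.integrableOn_Icc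
        · intro t ht
          rw [hV2, hV2, prim_sym B hB hBanti t ht]
      · -- k ≥ 3
        have hk3 : 3 ≤ k := h2
        have ih1 := ih (k - 1) (by omega) (by omega)
        have ih2 := ih (k - 2) (by omega) (by omega)
        set g : ℝ → ℝ := fun s => B s * V (k-1) s + A s * V (k-2) s with hg
        have hgc : ContinuousOn g (Icc 0 1) :=
          (hB.mul ih1.1).add (hA.mul ih2.1)
        have hganti : ∀ s ∈ Icc (0:ℝ) 1, g (1 - s) = - g s := by
          intro s hs
          simp only [hg]
          rw [hBanti s hs, hAanti s hs, ih1.2 s hs, ih2.2 s hs]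
          ring
        have hVe : V k = fun t => -(k:ℝ) * ∫ s in (0:ℝ)..t, g s := funext (hVk k hk3)
        constructor
        · rw [hVe]
          refine continuousOn_const.mul ?_
          have := intervalIntegral.continuousOn_primitive_interval
            (a := (0:ℝ)) (b := 1) (f := g) (μ := MeasureTheory.volume) ?_
          · simpa [uIcc_of_le (by norm_num : (0:ℝ) ≤ 1)] using this
          · simpa [uIcc_of_le (by norm_num : (0:ℝ) ≤ 1)] using hgc.integrableOn_Icc
        · intro t ht
          rw [hVk k hk3, hVk k hk3, prim_sym g hgc hganti t ht]
  intro n hn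
  have h01 : (0:ℝ) ∈ Icc (0:ℝ) 1 := by constructor <;> norm_num
  have hsym := (main n (by omega)).2 0 h01
  norm_num at hsym
  rw [hsym]
  rcases eq_or_lt_of_le hn with h | h
  · rw [← h, hV2]; simp
  · rw [hVk n h 0]; simp
end
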